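/- For every integer w ≥ 2, the polynomial z^w + z − 2 ∈ ℂ[z] has z = 1 as a root, and every other complex root z satisfies |z| > 1. In particular, 1 is the unique root of smallest absolute value. -/

import Mathlib

/-- `z = 1` is a root of `z^w + z - 2`, and every other complex root has
absolute value strictly greater than `1`; so `1` is the unique root of
smallest absolute value. -/
theorem root_one_smallest (w : ℕ) (hw : 2 ≤ w) :
    ((1 : ℂ) ^ w + 1 - 2 = 0) ∧
    ∀ z : ℂ, z ^ w + z - 2 = 0 → z ≠ 1 → 1 < ‖z‖ := by
  constructor
  · simp; ring
  · intro z hz hne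
    by_contra hle
    push_neg at hle
    have habs : ‖z‖ ≤ 1 := hle
    have heq : z ^ w + z = 2 := by linear_combination hz
    have h1 : (z ^ w).re + z.re = 2 := by
      have := congrArg Complex.re heq
      simpa [Complex.add_re] using this
    have h2 : (z ^ w).re ≤ 1 := by
      calc (z ^ w).re ≤ ‖z ^ w‖ := Complex.re_le_norm _
        _ = ‖z‖ ^ w := by simp [map_pow]
        _ ≤ 1 := pow_le_one₀ (norm_nonneg z) habs
    have h3 : z.re ≤ ‖z‖ := Complex.re_le_norm z
    have hre : z.re = 1 := by linarith
    have habs1 : ‖z‖ = 1 := le_antisymm habs (by linarith)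
    have him : z.im = 0 := by
      have := Complex.sq_norm z
      rw [habs1, Complex.normSq_apply, hre] at this
      nlinarith
    exact hne (Complex.ext (by simp [hre]) (by simp [him]))
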